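/- Let A(τ,ζ) = (τ, …, τ^s/s) M (1, ζ, …, ζ^{s−1})ᵀ with M ∈ ℝ^{s×s} symmetric, B(ζ) = A(1,ζ), C(τ) = ∫₀¹ A(τ,ζ) dζ, and suppose C(1) = 1. Then for any positive integer k, the condition ∫₀¹ A(τ,ζ) C(ζ)^k dζ = C(τ)^{k+1}/(k+1) for all τ ∈ [0,1] holds if and only if ∫₀¹ B(τ) C(τ)^{k−1} A(τ,ζ) dτ = (B(ζ)/k)(1 − C(ζ)^k) for all ζ ∈ [0,1]. -/

import Mathlib

open MeasureTheory Set

/-- For a consistent CSRK method with symmetric `M`, the `k`-th simplifying assumption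
`C` is equivalent to the `k`-th simplifying assumption `D`. -/
theorem stmt_7 {s : ℕ} (M : Matrix (Fin s) (Fin s) ℝ) (hM : M.IsSymm)
    (A : ℝ → ℝ → ℝ)
    (hA : ∀ τ ζ : ℝ, A τ ζ =
      ∑ i : Fin s, ∑ j : Fin s, (τ ^ ((i : ℕ) + 1) / ((i : ℕ) + 1)) * M i j * ζ ^ (j : ℕ))
    (B C : ℝ → ℝ)
    (hB : ∀ ζ, B ζ = A 1 ζ)
    (hC : ∀ τ, C τ = ∫ ζ in (0:ℝ)..1, A τ ζ)
    (hcons : C 1 = 1)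
    (k : ℕ) (hk : 0 < k) :
    (∀ τ ∈ Icc (0:ℝ) 1, ∫ ζ in (0:ℝ)..1, A τ ζ * C ζ ^ k = C τ ^ (k + 1) / (k + 1)) ↔
    (∀ ζ ∈ Icc (0:ℝ) 1, ∫ τ in (0:ℝ)..1, B τ * C τ ^ (k - 1) * A τ ζ
      = B ζ / k * (1 - C ζ ^ k)) := by
  -- coefficient vector
  set m : Fin s → ℝ := fun i => ∑ j : Fin s, M i j / ((j : ℕ) + 1) with hm
  -- explicit formula for C
  have hCeq : ∀ τ : ℝ, C τ = ∑ i : Fin s, τ ^ ((i : ℕ) + 1) / ((i : ℕ) + 1) * m i := by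
    intro τ
    rw [hC]
    have hig : ∀ ζ : ℝ, A τ ζ = ∑ i : Fin s, ∑ j : Fin s,
        (τ ^ ((i : ℕ) + 1) / ((i : ℕ) + 1) * M i j) * ζ ^ (j : ℕ) := by
      intro ζ; rw [hA]
    rw [intervalIntegral.integral_congr (fun ζ _ => hig ζ)]
    rw [intervalIntegral.integral_finset_sum
      (fun i _ => Continuous.intervalIntegrable (by fun_prop) _ _)]
    refine Finset.sum_congr rfl fun i _ => ?_
    rw [intervalIntegral.integral_finset_sum
      (fun j _ => Continuous.intervalIntegrable (by fun_prop) _ _)]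
    rw [hm, Finset.mul_sum]
    refine Finset.sum_congr rfl fun j _ => ?_
    rw [intervalIntegral.integral_const_mul, integral_pow]
    have hj : ((j : ℕ) : ℝ) + 1 ≠ 0 := by positivity
    rw [one_pow, zero_pow (Nat.succ_ne_zero _)]
    field_simp
    ring
  -- explicit formula for B
  have hBeq : ∀ τ : ℝ, B τ = ∑ i : Fin s, τ ^ (i : ℕ) * m i := by
    intro τ
    rw [hB, hA]
    rw [Finset.sum_comm]
    refine Finset.sum_congr rfl fun p _ => ?_
    rw [hm, Finset.mul_sum]
    refine Finset.sum_congr rfl fun q _ => ?_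
    rw [hM.apply p q, one_pow]
    ring
  -- C is continuous, B is continuous
  have hCc : Continuous C := by
    have : C = fun τ => ∑ i : Fin s, τ ^ ((i : ℕ) + 1) / ((i : ℕ) + 1) * m i := funext hCeq
    rw [this]; fun_prop
  have hBc : Continuous B := by
    have : B = fun τ => ∑ i : Fin s, τ ^ (i : ℕ) * m i := funext hBeq
    rw [this]; fun_prop
  -- C' = B
  have hCd : ∀ τ : ℝ, HasDerivAt C (B τ) τ := by
    intro τ
    have h1 : HasDerivAt (fun τ : ℝ => ∑ i : Fin s, τ ^ ((i : ℕ) + 1) / ((i : ℕ) + 1) * m i)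
        (∑ i : Fin s, τ ^ (i : ℕ) * m i) τ := by
      apply HasDerivAt.fun_sum
      intro i _
      have h2 := ((hasDerivAt_pow ((i : ℕ) + 1) τ).div_const ((i : ℕ) + 1)).mul_const (m i)
      refine h2.congr_deriv ?_
      have hi : ((i : ℕ) : ℝ) + 1 ≠ 0 := by positivity
      simp only [Nat.add_sub_cancel]
      push_cast
      field_simp
    rw [funext hCeq, hBeq]
    exact h1
  have hC0 : C 0 = 0 := by
    rw [hCeq]; simp
  -- moment coefficients
  set e : Fin s → ℝ := fun i => ∫ τ in (0:ℝ)..1, C τ ^ k * τ ^ (i : ℕ) with he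
  -- the key polynomial functions
  set u : ℝ → ℝ := fun τ => ∑ i : Fin s, ∑ j : Fin s, M i j * e j * τ ^ (i : ℕ) with hu
  set U : ℝ → ℝ := fun τ => ∑ i : Fin s, ∑ j : Fin s,
      M i j * e j * (τ ^ ((i : ℕ) + 1) / ((i : ℕ) + 1)) with hU
  -- the C-condition integral
  have hLC : ∀ τ : ℝ, (∫ ζ in (0:ℝ)..1, A τ ζ * C ζ ^ k) = U τ := by
    intro τ
    have hig : ∀ ζ : ℝ, A τ ζ * C ζ ^ k = ∑ i : Fin s, ∑ j : Fin s,
        (τ ^ ((i : ℕ) + 1) / ((i : ℕ) + 1) * M i j) * (C ζ ^ k * ζ ^ (j : ℕ)) := by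
      intro ζ
      rw [hA, Finset.sum_mul]
      refine Finset.sum_congr rfl fun i _ => ?_
      rw [Finset.sum_mul]
      exact Finset.sum_congr rfl fun j _ => by ring
    rw [intervalIntegral.integral_congr (fun ζ _ => hig ζ)]
    rw [intervalIntegral.integral_finset_sum
      (fun i _ => Continuous.intervalIntegrable (by fun_prop) _ _)]
    rw [hU]
    refine Finset.sum_congr rfl fun i _ => ?_
    rw [intervalIntegral.integral_finset_sum
      (fun j _ => Continuous.intervalIntegrable (by fun_prop) _ _)]
    refine Finset.sum_congr rfl fun j _ => ?_
    rw [intervalIntegral.integral_const_mul]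
    simp only [he]
    ring
  -- the D-condition integral
  have hLD : ∀ ζ : ℝ, (∫ τ in (0:ℝ)..1, B τ * C τ ^ (k - 1) * A τ ζ)
      = B ζ / k - u ζ / k := by
    have hk0 : (k : ℝ) ≠ 0 := Nat.cast_ne_zero.mpr hk.ne'
    have hF : ∀ i : Fin s, (∫ τ in (0:ℝ)..1, B τ * C τ ^ (k - 1) * τ ^ ((i : ℕ) + 1))
        = (1 - (((i : ℕ) : ℝ) + 1) * e i) / k := by
      intro i
      have hg : ∀ τ ∈ uIcc (0:ℝ) 1, HasDerivAt (fun τ => C τ ^ k * τ ^ ((i : ℕ) + 1))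
          ((k : ℝ) * (B τ * C τ ^ (k - 1) * τ ^ ((i : ℕ) + 1))
            + (((i : ℕ) : ℝ) + 1) * (C τ ^ k * τ ^ (i : ℕ))) τ := by
        intro τ _
        have h2 := ((hCd τ).pow k).mul (hasDerivAt_pow ((i : ℕ) + 1) τ)
        refine h2.congr_deriv ?_
        simp only [Nat.add_sub_cancel, Pi.pow_apply]
        push_cast
        ring
      have hint : (∫ τ in (0:ℝ)..1, ((k : ℝ) * (B τ * C τ ^ (k - 1) * τ ^ ((i : ℕ) + 1))
          + (((i : ℕ) : ℝ) + 1) * (C τ ^ k * τ ^ (i : ℕ)))) = 1 := by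
        rw [intervalIntegral.integral_eq_sub_of_hasDerivAt hg
          (Continuous.intervalIntegrable (by fun_prop) _ _)]
        simp [hcons, zero_pow (Nat.succ_ne_zero (i : ℕ))]
      rw [intervalIntegral.integral_add (Continuous.intervalIntegrable (by fun_prop) _ _)
          (Continuous.intervalIntegrable (by fun_prop) _ _),
        intervalIntegral.integral_const_mul, intervalIntegral.integral_const_mul] at hint
      simp only [he]
      field_simp at hint ⊢
      linarith
    intro ζ
    have hig : ∀ τ : ℝ, B τ * C τ ^ (k - 1) * A τ ζ = ∑ i : Fin s, ∑ j : Fin s,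
        (M i j / ((i : ℕ) + 1) * ζ ^ (j : ℕ)) * (B τ * C τ ^ (k - 1) * τ ^ ((i : ℕ) + 1)) := by
      intro τ
      rw [hA τ ζ, Finset.mul_sum]
      refine Finset.sum_congr rfl fun i _ => ?_
      rw [Finset.mul_sum]
      exact Finset.sum_congr rfl fun j _ => by ring
    rw [intervalIntegral.integral_congr (fun τ _ => hig τ)]
    rw [intervalIntegral.integral_finset_sum
      (fun i _ => Continuous.intervalIntegrable (by fun_prop) _ _)]
    have hstep : ∀ i : Fin s, (∫ τ in (0:ℝ)..1, ∑ j : Fin s,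
        (M i j / ((i : ℕ) + 1) * ζ ^ (j : ℕ)) * (B τ * C τ ^ (k - 1) * τ ^ ((i : ℕ) + 1)))
        = ∑ j : Fin s, (M i j / ((i : ℕ) + 1) * ζ ^ (j : ℕ))
            * ((1 - (((i : ℕ) : ℝ) + 1) * e i) / k) := by
      intro i
      rw [intervalIntegral.integral_finset_sum
        (fun j _ => Continuous.intervalIntegrable (by fun_prop) _ _)]
      refine Finset.sum_congr rfl fun j _ => ?_
      rw [intervalIntegral.integral_const_mul, hF i]
    rw [Finset.sum_congr rfl fun i _ => hstep i]
    have hswap : (∑ i : Fin s, ∑ j : Fin s, M i j * e j * ζ ^ (i : ℕ))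
        = ∑ i : Fin s, ∑ j : Fin s, e i * M i j * ζ ^ (j : ℕ) := by
      rw [Finset.sum_comm]
      refine Finset.sum_congr rfl fun i _ => ?_
      refine Finset.sum_congr rfl fun j _ => ?_
      rw [hM.apply i j]
      ring
    rw [hB ζ, hA 1 ζ, hu]
    simp only []
    rw [hswap]
    rw [Finset.sum_div, Finset.sum_div, ← Finset.sum_sub_distrib]
    refine Finset.sum_congr rfl fun i _ => ?_
    rw [Finset.sum_div, Finset.sum_div, ← Finset.sum_sub_distrib]
    refine Finset.sum_congr rfl fun j _ => ?_
    have hi : ((i : ℕ) : ℝ) + 1 ≠ 0 := by positivity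
    rw [one_pow]
    field_simp
  -- reformulate both conditions
  have hCiff : (∀ τ ∈ Icc (0:ℝ) 1, ∫ ζ in (0:ℝ)..1, A τ ζ * C ζ ^ k = C τ ^ (k + 1) / (k + 1))
      ↔ ∀ τ ∈ Icc (0:ℝ) 1, U τ = C τ ^ (k + 1) / (k + 1) := by
    constructor <;> intro h τ hτ <;> have := h τ hτ <;> rw [hLC] at * <;> linarith [this]
  have hDiff : (∀ ζ ∈ Icc (0:ℝ) 1, ∫ τ in (0:ℝ)..1, B τ * C τ ^ (k - 1) * A τ ζ
        = B ζ / k * (1 - C ζ ^ k))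
      ↔ ∀ ζ ∈ Icc (0:ℝ) 1, u ζ = B ζ * C ζ ^ k := by
    have hk0 : (k : ℝ) ≠ 0 := Nat.cast_ne_zero.mpr hk.ne'
    constructor <;> intro h ζ hζ <;> have h2 := h ζ hζ
    · rw [hLD] at h2
      field_simp at h2 ⊢; linarith
    · rw [hLD, h2]; field_simp
  rw [hCiff, hDiff]
  -- derivatives of U and of C^(k+1)/(k+1)
  have hUd : ∀ τ : ℝ, HasDerivAt U (u τ) τ := by
    intro τ
    have h1 : HasDerivAt (fun τ : ℝ => ∑ i : Fin s, ∑ j : Fin s,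
        M i j * e j * (τ ^ ((i : ℕ) + 1) / ((i : ℕ) + 1)))
        (∑ i : Fin s, ∑ j : Fin s, M i j * e j * τ ^ (i : ℕ)) τ := by
      apply HasDerivAt.fun_sum
      intro i _
      apply HasDerivAt.fun_sum
      intro j _
      have h2 := ((hasDerivAt_pow ((i : ℕ) + 1) τ).div_const ((i : ℕ) + 1)).const_mul
        (M i j * e j)
      refine h2.congr_deriv ?_
      have hi : ((i : ℕ) : ℝ) + 1 ≠ 0 := by positivity
      simp only [Nat.add_sub_cancel]
      push_cast
      field_simp
    rw [hU]
    exact h1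
  have hQd : ∀ τ : ℝ, HasDerivAt (fun τ => C τ ^ (k + 1) / (k + 1)) (B τ * C τ ^ k) τ := by
    intro τ
    have := ((hCd τ).pow (k + 1)).div_const ((k : ℝ) + 1)
    refine this.congr_deriv ?_
    push_cast
    have hne : (k : ℝ) + 1 ≠ 0 := by positivity
    field_simp
  have hU0 : U 0 = 0 := by rw [hU]; simp
  constructor
  · -- C-condition ⇒ D-condition
    intro h ζ hζ
    -- equality of derivatives on the interior, extended by continuity
    have huc : Continuous u := by rw [hu]; fun_prop
    have hqc : Continuous fun τ => B τ * C τ ^ k := by fun_prop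
    have heq : EqOn u (fun τ => B τ * C τ ^ k) (Ioo (0:ℝ) 1) := by
      intro τ hτ
      have hmem : Ioo (0:ℝ) 1 ∈ nhds τ := (isOpen_Ioo).mem_nhds hτ
      have hev : (fun τ => C τ ^ (k+1) / (k+1)) =ᶠ[nhds τ] U := by
        filter_upwards [hmem] with x hx
        exact (h x (Ioo_subset_Icc_self hx)).symm
      have h1 : HasDerivAt (fun τ => C τ ^ (k+1) / (k+1)) (u τ) τ :=
        (hUd τ).congr_of_eventuallyEq hev
      have := h1.unique (hQd τ)
      simpa using this
    have := heq.closure huc hqc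
    rw [closure_Ioo (by norm_num : (0:ℝ) ≠ 1)] at this
    exact this hζ
  · -- D-condition ⇒ C-condition
    intro h τ hτ
    have key : ∀ x ∈ Icc (0:ℝ) 1, U x - C x ^ (k+1) / (k+1) = U 0 - C 0 ^ (k+1) / (k+1) := by
      apply constant_of_has_deriv_right_zero
      · exact Continuous.continuousOn (by fun_prop)
      · intro x hx
        have hd : HasDerivAt (fun y => U y - C y ^ (k+1) / (k+1)) (u x - B x * C x ^ k) x :=
          (hUd x).sub (hQd x)
        have hz : u x - B x * C x ^ k = 0 := by
          rw [h x (Ico_subset_Icc_self hx)]; ring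
        rw [hz] at hd
        exact hd.hasDerivWithinAt
    have := key τ hτ
    rw [hU0, hC0] at this
    simp only [zero_pow (Nat.succ_ne_zero k), zero_div, sub_zero] at this
    linarith
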